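/- Let $n$ be a positive integer with prime factorization $n = p_1^{\alpha_1}\cdots p_k^{\alpha_k}$ (the $p_i$ distinct primes, $\alpha_i \ge 1$). Then $$\prod_{i=1}^k \ \sum_{\substack{1 \le m_i \le p_i^{\alpha_i} \\ p_i \nmid m_i}} \gcd(m_i - 1, p_i^{\alpha_i}) \,=\, \varphi(n)\,\tau(n),$$ where $\varphi$ is Euler's totient function and $\tau(n)$ is the number of positive divisors of $n$. -/

import Mathlib

open Finset

lemma mult_count (d c : ℕ) (hd : 0 < d) :
    ((Finset.range (c * d)).filter (fun y => d ∣ y)).card = c := by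
  have : (Finset.range (c * d)).filter (fun y => d ∣ y)
      = (Finset.range c).image (· * d) := by
    ext y
    simp only [mem_filter, mem_range, mem_image]
    constructor
    · rintro ⟨hy, s, rfl⟩
      refine ⟨s, ?_, by ring⟩
      by_contra h
      push_neg at h
      exact absurd (Nat.mul_le_mul_right d h) (by rw [mul_comm d s] at hy; omega)
    · rintro ⟨s, hs, rfl⟩
      exact ⟨(Nat.mul_lt_mul_right hd).mpr hs, s, by ring⟩
  rw [this, Finset.card_image_of_injective _ (fun a b h =>
    Nat.eq_of_mul_eq_mul_right hd h), Finset.card_range]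

lemma gcd_eq_sum (y q : ℕ) (hq : 0 < q) :
    Nat.gcd y q = ∑ d ∈ q.divisors, if d ∣ y then Nat.totient d else 0 := by
  have hg : Nat.gcd y q ≠ 0 := fun h => hq.ne' (Nat.eq_zero_of_gcd_eq_zero_right h)
  have hset : (Nat.gcd y q).divisors = q.divisors.filter (· ∣ y) := by
    ext d
    simp only [Nat.mem_divisors, Nat.dvd_gcd_iff, mem_filter]
    constructor
    · rintro ⟨⟨h1, h2⟩, -⟩
      exact ⟨⟨h2, hq.ne'⟩, h1⟩
    · rintro ⟨⟨h2, -⟩, h1⟩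
      exact ⟨⟨h1, h2⟩, hg⟩
  rw [← Nat.sum_totient (Nat.gcd y q), hset, Finset.sum_filter]

lemma key (p a : ℕ) (hp : p.Prime) (ha : 1 ≤ a) :
    (∑ x ∈ (Finset.Icc 1 (p ^ a)).filter (fun x => ¬ p ∣ x), Nat.gcd (x - 1) (p ^ a))
      = Nat.totient (p ^ a) * (p ^ a).divisors.card := by
  have hq : 0 < p ^ a := pow_pos hp.pos a
  have stepA : (∑ x ∈ (Finset.Icc 1 (p ^ a)).filter (fun x => ¬ p ∣ x), Nat.gcd (x - 1) (p ^ a))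
      = ∑ y ∈ (Finset.range (p ^ a)).filter (fun y => ¬ p ∣ (y + 1)), Nat.gcd y (p ^ a) := by
    apply Finset.sum_nbij' (i := fun x => x - 1) (j := fun y => y + 1)
    · intro x hx
      simp only [mem_filter, mem_Icc, mem_range] at hx ⊢
      refine ⟨by omega, ?_⟩
      rw [Nat.sub_add_cancel hx.1.1]
      exact hx.2
    · intro y hy
      simp only [mem_filter, mem_Icc, mem_range] at hy ⊢
      exact ⟨⟨by omega, by omega⟩, hy.2⟩
    · intro x hx
      simp only [mem_filter, mem_Icc] at hx
      omega
    · intro y _; omega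
    · intro x _; rfl
  rw [stepA]
  have stepB : ∀ y ∈ (Finset.range (p ^ a)).filter (fun y => ¬ p ∣ (y + 1)),
      Nat.gcd y (p ^ a) = ∑ d ∈ (p ^ a).divisors, if d ∣ y then Nat.totient d else 0 :=
    fun y _ => gcd_eq_sum y (p ^ a) hq
  rw [Finset.sum_congr rfl stepB, Finset.sum_comm]
  have stepC : ∀ d : ℕ, (∑ y ∈ (Finset.range (p ^ a)).filter (fun y => ¬ p ∣ (y + 1)),
      if d ∣ y then Nat.totient d else 0)
      = ((Finset.range (p ^ a)).filter (fun y => ¬ p ∣ (y + 1) ∧ d ∣ y)).card * Nat.totient d := by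
    intro d
    rw [← Finset.sum_filter, Finset.filter_filter, Finset.sum_const, smul_eq_mul]
  simp only [stepC]
  rw [Nat.sum_divisors_prime_pow hp, Finset.sum_range_succ']
  have hdiv : p ^ a / p = p ^ (a - 1) := by
    conv_lhs => rw [show a = (a - 1) + 1 by omega, pow_succ]
    exact Nat.mul_div_cancel _ hp.pos
  have h0 : ((Finset.range (p ^ a)).filter (fun y => ¬ p ∣ (y + 1) ∧ (p ^ 0) ∣ y)).card
      * Nat.totient (p ^ 0) = p ^ a - p ^ (a - 1) := by
    simp only [pow_zero, one_dvd, and_true, Nat.totient_one, mul_one]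
    have hsplit := Finset.card_filter_add_card_filter_not
      (s := Finset.range (p ^ a)) (p := fun y => p ∣ (y + 1))
    have hcm : ((Finset.range (p ^ a)).filter (fun y => p ∣ (y + 1))).card = p ^ a / p :=
      Nat.card_multiples (p ^ a) p
    rw [Finset.card_range] at hsplit
    omega
  have h1 : ∀ i ∈ Finset.range a,
      ((Finset.range (p ^ a)).filter (fun y => ¬ p ∣ (y + 1) ∧ (p ^ (i + 1)) ∣ y)).card
      * Nat.totient (p ^ (i + 1)) = p ^ (a - 1) * (p - 1) := by
    intro i hi
    rw [mem_range] at hi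
    have hfe : (Finset.range (p ^ a)).filter (fun y => ¬ p ∣ (y + 1) ∧ (p ^ (i + 1)) ∣ y)
        = (Finset.range (p ^ a)).filter (fun y => (p ^ (i + 1)) ∣ y) := by
      apply Finset.filter_congr
      intro y _
      simp only [and_iff_right_iff_imp]
      intro hdy hpy1
      have hpy : p ∣ y := dvd_trans (dvd_pow_self p (Nat.succ_ne_zero i)) hdy
      have : p ∣ 1 := by simpa using Nat.dvd_sub hpy1 hpy
      exact hp.one_lt.ne' (Nat.dvd_one.mp this)
    rw [hfe]
    have hpow : p ^ a = p ^ (a - 1 - i) * p ^ (i + 1) := by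
      rw [← pow_add]
      congr 1
      omega
    rw [hpow, mult_count _ _ (pow_pos hp.pos _),
      Nat.totient_prime_pow hp (Nat.succ_pos i)]
    rw [← mul_assoc, ← pow_add]
    congr 2
    omega
  rw [Finset.sum_congr rfl h1, h0, Finset.sum_const, Finset.card_range, smul_eq_mul,
    Nat.totient_prime_pow hp (by omega : 0 < a), Nat.divisors_prime_pow hp, Finset.card_map,
    Finset.card_range]
  have hpa : p ^ a = p ^ (a - 1) * p := by
    rw [← pow_succ]
    congr 1
    omega
  rw [hpa]
  have h2 : 1 ≤ p := hp.pos
  generalize p ^ (a - 1) = P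
  have : P * p - P = P * (p - 1) := by
    rw [Nat.mul_sub, mul_one]
  rw [this]
  generalize p - 1 = r
  ring


open scoped Function in
lemma aux_prod_coprime {ι : Type*} (F : ℕ → ℕ) (hF1 : F 1 = 1)
    (hF : ∀ m n : ℕ, m.Coprime n → F (m * n) = F m * F n)
    (s : Finset ι) (g : ι → ℕ) (hs : (↑s : Set ι).Pairwise (Nat.Coprime on g)) :
    F (∏ i ∈ s, g i) = ∏ i ∈ s, F (g i) := by
  classical
  induction' s using Finset.induction_on with a s has ih hs
  · simp [hF1]
  rw [Finset.coe_insert, Set.pairwise_insert_of_symm] at hs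
  rw [Finset.prod_insert has, Finset.prod_insert has,
    hF _ _ (Nat.Coprime.prod_right fun i hi => hs.2 _ hi (hi.ne_of_notMem has).symm), ih hs.1]

/-- Identity (4): for `n = ∏ pᵢ^{αᵢ}` (distinct primes, `αᵢ ≥ 1`),
`∏ᵢ ∑_{1 ≤ mᵢ ≤ pᵢ^{αᵢ}, pᵢ ∤ mᵢ} gcd(mᵢ-1, pᵢ^{αᵢ}) = φ(n) τ(n)`. -/
theorem stmt3 (n : ℕ) (hn : 0 < n) (k : ℕ) (p : Fin k → ℕ) (hp : ∀ i, (p i).Prime)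
    (hinj : Function.Injective p) (α : Fin k → ℕ) (hα : ∀ i, 1 ≤ α i)
    (hfac : n = ∏ i, p i ^ α i) :
    (∏ i, ∑ x ∈ (Finset.Icc 1 (p i ^ α i)).filter (fun x => ¬ p i ∣ x),
        Nat.gcd (x - 1) (p i ^ α i))
      = Nat.totient n * n.divisors.card := by
  have hcop : (↑(Finset.univ : Finset (Fin k)) : Set (Fin k)).Pairwise
      (Function.onFun Nat.Coprime fun i => p i ^ α i) := by
    intro i _ j _ hij
    exact Nat.Coprime.pow _ _
      ((Nat.coprime_primes (hp i) (hp j)).mpr (fun h => hij (hinj h)))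
  have htot : Nat.totient n = ∏ i, Nat.totient (p i ^ α i) := by
    rw [hfac]
    exact aux_prod_coprime Nat.totient Nat.totient_one
      (fun m n h => Nat.totient_mul h) Finset.univ _ hcop
  have hcard : n.divisors.card = ∏ i, (p i ^ α i).divisors.card := by
    rw [hfac]
    exact aux_prod_coprime (fun m => m.divisors.card) (by simp)
      (fun m n h => Nat.Coprime.card_divisors_mul h) Finset.univ _ hcop
  rw [htot, hcard, ← Finset.prod_mul_distrib]
  exact Finset.prod_congr rfl fun i _ => key (p i) (α i) (hp i) (hα i)
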